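/- Let n ≥ 2, B the open unit ball of ℝⁿ, and 0 < δ < 1. There exist a sequence of points {a_k} in B and a positive integer N such that: (i) ρ(a_j, a_k) ≥ δ for all j ≠ k; (ii) the union of the pseudohyperbolic balls E_δ(a_k) over all k equals B; (iii) every x ∈ B belongs to at most N of the balls E_δ(a_k). -/

import Mathlib

set_option maxHeartbeats 1000000


open MeasureTheory Filter Set
open scoped ENNReal NNReal Topology

noncomputable section

/-- Euclidean space ℝⁿ. -/
abbrev E (n : ℕ) := EuclideanSpace ℝ (Fin n)

/-- The open unit ball of ℝⁿ. -/
def Bset (n : ℕ) : Set (E n) := Metric.ball 0 1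

/-- The bracket `[x,y] = √(1 − 2 x·y + |x|²|y|²)`. -/
def br {n : ℕ} (x y : E n) : ℝ := Real.sqrt (1 - 2 * (inner ℝ x y : ℝ) + ‖x‖ ^ 2 * ‖y‖ ^ 2)

/-- The pseudohyperbolic distance `ρ(x,y) = |x − y|/[x,y]`. -/
def pd {n : ℕ} (x y : E n) : ℝ := ‖x - y‖ / br x y

/-- The pseudohyperbolic ball `E_δ(x) = {y ∈ B : ρ(x,y) < δ}`. -/
def Eball {n : ℕ} (δ : ℝ) (x : E n) : Set (E n) := {y | y ∈ Bset n ∧ pd x y < δ}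

/-- Lebesgue volume measure on ℝⁿ normalized so that `ν(B) = 1`. -/
def nu (n : ℕ) : Measure (E n) := (volume (Bset n))⁻¹ • volume

section Aux

variable {n : ℕ}

lemma rad_eq (x y : E n) :
    1 - 2 * (inner ℝ x y : ℝ) + ‖x‖ ^ 2 * ‖y‖ ^ 2
      = (1 - ‖x‖ ^ 2) * (1 - ‖y‖ ^ 2) + ‖x - y‖ ^ 2 := by
  have h := norm_sub_sq_real x y
  linarith [h, sq_nonneg (‖x‖ - ‖y‖)]

lemma br_sq {x y : E n} (hx : ‖x‖ ≤ 1) (hy : ‖y‖ ≤ 1) :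
    br x y ^ 2 = (1 - ‖x‖ ^ 2) * (1 - ‖y‖ ^ 2) + ‖x - y‖ ^ 2 := by
  rw [br, Real.sq_sqrt, rad_eq]
  rw [rad_eq]
  have h1 : (0:ℝ) ≤ (1 - ‖x‖ ^ 2) * (1 - ‖y‖ ^ 2) :=
    mul_nonneg (by nlinarith [norm_nonneg x]) (by nlinarith [norm_nonneg y])
  nlinarith [sq_nonneg ‖x - y‖]

lemma br_ge {x y : E n} (hx : ‖x‖ ≤ 1) (hy : ‖y‖ ≤ 1) : 1 - ‖x‖ * ‖y‖ ≤ br x y := by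
  have h1 : (1 - ‖x‖ * ‖y‖) ^ 2 ≤ 1 - 2 * (inner ℝ x y : ℝ) + ‖x‖ ^ 2 * ‖y‖ ^ 2 := by
    nlinarith [real_inner_le_norm x y]
  calc 1 - ‖x‖ * ‖y‖ = Real.sqrt ((1 - ‖x‖ * ‖y‖) ^ 2) := by
        rw [Real.sqrt_sq (by nlinarith [norm_nonneg x, norm_nonneg y])]
    _ ≤ br x y := Real.sqrt_le_sqrt h1

lemma br_ge_left {x y : E n} (hx : ‖x‖ ≤ 1) (hy : ‖y‖ ≤ 1) : (1 - ‖x‖ ^ 2) / 2 ≤ br x y := by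
  have := br_ge hx hy
  nlinarith [norm_nonneg x, norm_nonneg y]

lemma br_ge_right {x y : E n} (hx : ‖x‖ ≤ 1) (hy : ‖y‖ ≤ 1) : (1 - ‖y‖ ^ 2) / 2 ≤ br x y := by
  have := br_ge hx hy
  nlinarith [norm_nonneg x, norm_nonneg y]

lemma br_pos {x y : E n} (hx : ‖x‖ < 1) (hy : ‖y‖ ≤ 1) : 0 < br x y :=
  lt_of_lt_of_le (by nlinarith [norm_nonneg x]) (br_ge_left hx.le hy)

lemma pd_comm (x y : E n) : pd x y = pd y x := by
  unfold pd br
  rw [norm_sub_rev, real_inner_comm, mul_comm (‖x‖^2)]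

lemma pd_self (x : E n) : pd x x = 0 := by simp [pd]

/-- Key geometric estimates when `pd y x < δ`. -/
lemma geom {δ : ℝ} (hδ0 : 0 < δ) (hδ1 : δ < 1) {x y : E n} (hx : ‖x‖ < 1) (hy : ‖y‖ < 1)
    (h : pd y x < δ) :
    (1 - δ^2) * (1 - ‖x‖^2) / 4 < 1 - ‖y‖^2 ∧
    1 - ‖y‖^2 < 4 * (1 - ‖x‖^2) / (1 - δ^2) ∧
    ‖y - x‖ ≤ 2 * (1 - ‖x‖^2) / (1 - δ^2) := by
  set t := 1 - ‖x‖^2 with ht_def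
  set u := 1 - ‖y‖^2 with hu_def
  have ht : 0 < t := by nlinarith [norm_nonneg x]
  have hu : 0 < u := by nlinarith [norm_nonneg y]
  have hδ2 : 0 < 1 - δ^2 := by nlinarith
  set b := br y x with hb_def
  set d := ‖y - x‖ with hd_def
  have hbpos : 0 < b := br_pos hy hx.le
  have hb2 : b^2 = u * t + d^2 := br_sq hy.le hx.le
  have hbt : t/2 ≤ b := br_ge_right hy.le hx.le
  have hbu : u/2 ≤ b := br_ge_left hy.le hx.le
  have hd : d < δ * b := by
    rw [pd] at h
    exact (div_lt_iff₀ hbpos).mp h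
  have hdnn : 0 ≤ d := norm_nonneg _
  have h1 : (1 - δ^2) * b^2 < u * t := by nlinarith
  have hbt2 : t^2/4 ≤ b^2 := by nlinarith
  have hbu2 : u^2/4 ≤ b^2 := by nlinarith
  have h2 : (1 - δ^2) * t / 4 < u := by
    have hh : (1 - δ^2) * t / 4 * t < u * t := by nlinarith
    exact lt_of_mul_lt_mul_right hh ht.le
  have h3 : (1 - δ^2) * u / 4 < t := by
    have hh : (1 - δ^2) * u / 4 * u < t * u := by nlinarith
    exact lt_of_mul_lt_mul_right hh hu.le
  have h3' : u < 4 * t / (1 - δ^2) := by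
    rw [lt_div_iff₀ hδ2]; nlinarith [h3]
  refine ⟨h2, h3', ?_⟩
  have hd2 : d^2 * (1 - δ^2) < δ^2 * (u * t) := by nlinarith
  have h3u : u * (1 - δ^2) < 4 * t := by nlinarith [h3]
  have s1 : d^2 * (1 - δ^2) * (1 - δ^2) ≤ δ^2 * (u * t) * (1 - δ^2) := by nlinarith
  have s2 : δ^2 * (u * t) * (1 - δ^2) ≤ u * t * (1 - δ^2) := by nlinarith [mul_nonneg (mul_nonneg hδ2.le (mul_pos hu ht).le) hδ2.le]
  have s3 : u * t * (1 - δ^2) < 4 * t * t := by nlinarith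
  have h4 : (d * (1 - δ^2))^2 ≤ (2 * t)^2 := by nlinarith
  have h5 : d * (1 - δ^2) ≤ 2 * t := by
    calc d * (1 - δ^2) = Real.sqrt ((d * (1 - δ^2))^2) := by
          rw [Real.sqrt_sq (by positivity)]
      _ ≤ Real.sqrt ((2 * t)^2) := Real.sqrt_le_sqrt h4
      _ = 2 * t := Real.sqrt_sq (by positivity)
  rw [le_div_iff₀ hδ2]; linarith

/-- Separation gives Euclidean separation at scale of both points. -/
lemma sep_dist {δ : ℝ} (hδ0 : 0 < δ) {x y : E n} (hx : ‖x‖ < 1) (hy : ‖y‖ < 1)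
    (h : δ ≤ pd x y) :
    δ * (1 - ‖x‖^2) / 2 ≤ ‖x - y‖ ∧ δ * (1 - ‖y‖^2) / 2 ≤ ‖x - y‖ := by
  have hbpos : 0 < br x y := br_pos hx hy.le
  have hd : δ * br x y ≤ ‖x - y‖ := by
    rw [pd] at h
    exact (le_div_iff₀ hbpos).mp h
  have h1 := br_ge_left hx.le hy.le
  have h2 := br_ge_right hx.le hy.le
  constructor <;> nlinarith

/-- Two δ-separated points have disjoint small Euclidean balls. -/
lemma disj_balls {δ : ℝ} (hδ0 : 0 < δ) {x y : E n} (hx : ‖x‖ < 1) (hy : ‖y‖ < 1)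
    (h : δ ≤ pd x y) :
    Disjoint (Metric.ball x (δ/8 * (1 - ‖x‖^2))) (Metric.ball y (δ/8 * (1 - ‖y‖^2))) := by
  apply Metric.ball_disjoint_ball
  rw [dist_eq_norm]
  obtain ⟨h1, h2⟩ := sep_dist hδ0 hx hy h
  nlinarith [norm_nonneg (x - y)]

lemma vol_ball (hn : 1 ≤ n) (c : E n) {r : ℝ} (hr : 0 ≤ r) :
    volume (Metric.ball c r)
      = ENNReal.ofReal (r ^ n) * volume (Metric.ball (0 : E n) 1) := by
  haveI : Nontrivial (E n) := by
    have : 0 < Module.finrank ℝ (E n) := by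
      rw [finrank_euclideanSpace_fin]; omega
    exact Module.nontrivial_of_finrank_pos this
  rw [Measure.addHaar_ball volume c hr, finrank_euclideanSpace_fin]

/-- The core counting bound. -/
lemma count_bound (hn : 1 ≤ n) {δ : ℝ} (hδ0 : 0 < δ) (hδ1 : δ < 1) {x : E n} (hx : ‖x‖ < 1)
    (a : ℕ → E n) (F : Finset ℕ)
    (hmem : ∀ k ∈ F, ‖a k‖ < 1 ∧ pd (a k) x < δ)
    (hsep : ∀ j ∈ F, ∀ k ∈ F, j ≠ k → δ ≤ pd (a j) (a k)) :
    (F.card : ℝ) ≤ (96 / (δ * (1 - δ^2)^2)) ^ n := by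
  have hδ2 : 0 < 1 - δ^2 := by nlinarith
  set t := 1 - ‖x‖^2 with ht_def
  have ht : 0 < t := by nlinarith [norm_nonneg x]
  set r₀ : ℝ := δ * (1 - δ^2) * t / 32 with hr₀_def
  set R₀ : ℝ := 3 * t / (1 - δ^2) with hR₀_def
  have hr₀ : 0 < r₀ := by positivity
  have hR₀ : 0 < R₀ := by positivity
  set ρ : ℕ → ℝ := fun k => δ / 8 * (1 - ‖a k‖^2) with hρ_def
  -- radius bounds
  have hrad : ∀ k ∈ F, r₀ ≤ ρ k ∧ ρ k ≤ δ * t / (2 * (1 - δ^2)) := by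
    intro k hk
    obtain ⟨hk1, hk2⟩ := hmem k hk
    obtain ⟨g1, g2, g3⟩ := geom hδ0 hδ1 hx hk1 hk2
    constructor
    · rw [hρ_def]; simp only; nlinarith
    · rw [hρ_def]; simp only
      rw [lt_div_iff₀ hδ2] at g2
      rw [le_div_iff₀ (by positivity : (0:ℝ) < 2 * (1 - δ^2))]
      nlinarith
  -- the balls are inside ball x R₀
  have hsub : ∀ k ∈ F, Metric.ball (a k) (ρ k) ⊆ Metric.ball x R₀ := by
    intro k hk
    obtain ⟨hk1, hk2⟩ := hmem k hk
    obtain ⟨g1, g2, g3⟩ := geom hδ0 hδ1 hx hk1 hk2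
    apply Metric.ball_subset_ball'
    rw [dist_eq_norm]
    have h1 := (hrad k hk).2
    have h2 : δ * t / (2 * (1 - δ^2)) ≤ t / (1 - δ^2) := by
      rw [div_le_div_iff₀ (by positivity) hδ2]; nlinarith [mul_pos ht hδ2]
    have h3 : 2 * t / (1 - δ^2) + t / (1 - δ^2) = R₀ := by
      rw [hR₀_def]; ring
    linarith
  -- pairwise disjoint
  have hdisj : (F : Set ℕ).PairwiseDisjoint (fun k => Metric.ball (a k) (ρ k)) := by
    intro j hj k hk hjk
    exact disj_balls hδ0 (hmem j hj).1 (hmem k hk).1 (hsep j hj k hk hjk)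
  -- measure computation
  set V := volume (Metric.ball (0 : E n) 1) with hV_def
  have hV0 : V ≠ 0 := (Metric.measure_ball_pos volume (0 : E n) one_pos).ne'
  have hVtop : V ≠ ⊤ := measure_ball_lt_top.ne
  have key : (F.card : ℝ≥0∞) * ENNReal.ofReal (r₀ ^ n) * V ≤ ENNReal.ofReal (R₀ ^ n) * V := by
    calc (F.card : ℝ≥0∞) * ENNReal.ofReal (r₀ ^ n) * V
        = ∑ k ∈ F, ENNReal.ofReal (r₀ ^ n) * V := by
          rw [Finset.sum_const, nsmul_eq_mul, mul_assoc]
      _ ≤ ∑ k ∈ F, volume (Metric.ball (a k) (ρ k)) := by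
          apply Finset.sum_le_sum
          intro k hk
          rw [vol_ball hn _ (le_trans hr₀.le (hrad k hk).1)]
          exact mul_le_mul_left (ENNReal.ofReal_le_ofReal
            (pow_le_pow_left₀ hr₀.le (hrad k hk).1 n)) V
      _ = volume (⋃ k ∈ F, Metric.ball (a k) (ρ k)) :=
          (measure_biUnion_finset hdisj (fun k _ => measurableSet_ball)).symm
      _ ≤ volume (Metric.ball x R₀) :=
          measure_mono (Set.iUnion₂_subset hsub)
      _ = ENNReal.ofReal (R₀ ^ n) * V := vol_ball hn x hR₀.le
  have key2 : (F.card : ℝ≥0∞) * ENNReal.ofReal (r₀ ^ n) ≤ ENNReal.ofReal (R₀ ^ n) :=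
    (ENNReal.mul_le_mul_iff_left hV0 hVtop).mp key
  have key3 : (F.card : ℝ) * r₀ ^ n ≤ R₀ ^ n := by
    rw [← ENNReal.ofReal_natCast F.card, ← ENNReal.ofReal_mul (by positivity)] at key2
    exact (ENNReal.ofReal_le_ofReal_iff (by positivity)).mp key2
  have hMr : (96 / (δ * (1 - δ^2)^2)) * r₀ = R₀ := by
    rw [hr₀_def, hR₀_def]
    field_simp
    ring
  have hRpow : R₀ ^ n = (96 / (δ * (1 - δ^2)^2)) ^ n * r₀ ^ n := by
    rw [← mul_pow, hMr]
  rw [hRpow] at key3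
  exact le_of_mul_le_mul_right key3 (by positivity)

lemma mem_Bset_iff (x : E n) : x ∈ Bset n ↔ ‖x‖ < 1 := mem_ball_zero_iff

/-- Existence of a maximal δ-separated subset of the ball. -/
lemma exists_maximal_sep (hδ0 : 0 < (δ:ℝ)) :
    ∃ S : Set (E n), (0:E n) ∈ S ∧
      Maximal (· ∈ {S : Set (E n) | S ⊆ Bset n ∧ S.Pairwise fun a b => δ ≤ pd a b}) S := by
  obtain ⟨S, h0, hmax⟩ := zorn_subset_nonempty
    {S : Set (E n) | S ⊆ Bset n ∧ S.Pairwise fun a b => δ ≤ pd a b}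
    (fun c hc hchain _ => by
      refine ⟨⋃₀ c, ⟨?_, ?_⟩, fun s hs => subset_sUnion_of_mem hs⟩
      · exact sUnion_subset fun s hs => (hc hs).1
      · intro p hp q hq hpq
        obtain ⟨s₁, hs₁, hps⟩ := hp
        obtain ⟨s₂, hs₂, hqs⟩ := hq
        rcases hchain.total hs₁ hs₂ with h | h
        · exact (hc hs₂).2 (h hps) hqs hpq
        · exact (hc hs₁).2 hps (h hqs) hpq)
    {0} ⟨by
      intro z hz
      rw [mem_singleton_iff] at hz
      subst hz
      exact Metric.mem_ball_self one_pos, pairwise_singleton _ _⟩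
  exact ⟨S, h0 rfl, hmax⟩

lemma pd_symmetric {δ : ℝ} : Symmetric (fun a b : E n => δ ≤ pd a b) := by
  intro a b h
  simpa [pd_comm] using h

/-- A maximal δ-separated set is infinite. -/
lemma maximal_infinite (hn : 1 ≤ n) {δ : ℝ} (hδ0 : 0 < δ) (hδ1 : δ < 1) {S : Set (E n)}
    (h0 : (0:E n) ∈ S)
    (hmax : Maximal (· ∈ {S : Set (E n) | S ⊆ Bset n ∧ S.Pairwise fun a b => δ ≤ pd a b}) S) :
    S.Infinite := by
  intro hfin
  have hSB : S ⊆ Bset n := hmax.1.1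
  have hSp : S.Pairwise fun a b => δ ≤ pd a b := hmax.1.2
  have hδ2 : 0 < 1 - δ^2 := by nlinarith
  -- a bound on the norms of points of S
  obtain ⟨a₀, ha₀S, ha₀max⟩ := Set.exists_max_image S (fun a => ‖a‖) hfin ⟨0, h0⟩
  set m := ‖a₀‖ with hm_def
  have hm0 : 0 ≤ m := norm_nonneg _
  have hm1 : m < 1 := (mem_Bset_iff _).mp (hSB ha₀S)
  set η : ℝ := min ((1-m)/2) ((1-m)^2 * (1-δ^2) / 16) with hη_def
  have hmm : (0:ℝ) < 1 - m := by linarith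
  have hη0 : 0 < η := lt_min (by linarith) (by nlinarith [mul_pos (mul_pos hmm hmm) hδ2])
  have hη1 : η ≤ (1-m)/2 := min_le_left _ _
  have hη2 : η ≤ (1-m)^2 * (1-δ^2) / 16 := min_le_right _ _
  set v : E n := EuclideanSpace.single (⟨0, by omega⟩ : Fin n) (1:ℝ) with hv_def
  have hv : ‖v‖ = 1 := by rw [hv_def, EuclideanSpace.norm_single]; norm_num
  set y : E n := (1 - η) • v with hy_def
  have hyn : ‖y‖ = 1 - η := by
    rw [hy_def, norm_smul, hv, mul_one, Real.norm_eq_abs, abs_of_pos (by linarith)]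
  have hyB : y ∈ Bset n := (mem_Bset_iff _).mpr (by rw [hyn]; linarith)
  have hynotS : y ∉ S := by
    intro hyS
    have := ha₀max y hyS
    rw [hyn] at this
    linarith
  -- every point of S is δ-far from y
  have hfar : ∀ a ∈ S, δ ≤ pd a y := by
    intro a haS
    have haB : ‖a‖ < 1 := (mem_Bset_iff _).mp (hSB haS)
    have ham : ‖a‖ ≤ m := ha₀max a haS
    have hbpos : 0 < br a y := br_pos haB (by rw [hyn]; linarith)
    have hb2 : br a y ^ 2 = (1 - ‖a‖^2) * (1 - ‖y‖^2) + ‖a - y‖^2 :=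
      br_sq haB.le (by rw [hyn]; linarith)
    have hd : (1-m)/2 ≤ ‖a - y‖ := by
      have h1 : ‖y‖ - ‖a‖ ≤ ‖a - y‖ := by
        rw [norm_sub_rev]
        exact le_trans (by linarith [norm_sub_norm_le y a]) le_rfl
      rw [hyn] at h1
      linarith
    have hu : 1 - ‖y‖^2 ≤ 2 * η := by rw [hyn]; nlinarith
    have hkey : (δ * br a y)^2 ≤ ‖a - y‖^2 := by
      have h1 : 1 - ‖a‖^2 ≤ 1 := by nlinarith [norm_nonneg a]
      have h2 : δ^2 * (1 - ‖y‖^2) ≤ (1 - δ^2) * ((1-m)/2)^2 := by nlinarith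
      have h3 : ((1-m)/2)^2 ≤ ‖a - y‖^2 := by nlinarith [norm_nonneg (a - y)]
      have hy2 : (0:ℝ) ≤ 1 - ‖y‖^2 := by rw [hyn]; nlinarith
      have ha2 : (0:ℝ) ≤ 1 - ‖a‖^2 := by nlinarith [norm_nonneg a]
      have h1' : (1 - ‖a‖^2) * (1 - ‖y‖^2) ≤ 1 - ‖y‖^2 := by nlinarith
      have s1 : δ^2 * ((1 - ‖a‖^2) * (1 - ‖y‖^2)) ≤ δ^2 * (1 - ‖y‖^2) :=
        mul_le_mul_of_nonneg_left h1' (sq_nonneg δ)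
      have s2 : (1 - δ^2) * ((1-m)/2)^2 ≤ (1 - δ^2) * ‖a - y‖^2 :=
        mul_le_mul_of_nonneg_left h3 hδ2.le
      nlinarith [s1, s2, h2, hb2]
    have : δ * br a y ≤ ‖a - y‖ := by
      have := Real.sqrt_le_sqrt hkey
      rwa [Real.sqrt_sq (by positivity), Real.sqrt_sq (norm_nonneg _)] at this
    rw [pd, le_div_iff₀ hbpos]
    linarith
  -- contradiction with maximality
  have hT : insert y S ∈ {S : Set (E n) | S ⊆ Bset n ∧ S.Pairwise fun a b => δ ≤ pd a b} := by
    constructor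
    · exact insert_subset hyB hSB
    · haveI : Std.Symm (fun a b : E n => δ ≤ pd a b) := ⟨fun a b h => pd_symmetric h⟩
      rw [pairwise_insert_of_symm]
      exact ⟨hSp, fun b hb _ => by rw [pd_comm]; exact hfar b hb⟩
  have := hmax.2 hT (subset_insert y S) (mem_insert y S)
  exact hynotS this


end Aux

/-- For `0 < δ < 1` there exist a sequence `{a_k}` in `B` and `N ∈ ℕ`, `N > 0`,
such that `{a_k}` is `δ`-separated, the balls `E_δ(a_k)` cover `B`, and every `x ∈ B`
belongs to at most `N` of the balls `E_δ(a_k)`. -/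
theorem stmt5 (n : ℕ) (hn : 2 ≤ n) (δ : ℝ) (hδ0 : 0 < δ) (hδ1 : δ < 1) :
    ∃ (a : ℕ → E n) (N : ℕ), 0 < N ∧ (∀ k, a k ∈ Bset n) ∧
      (∀ j k, j ≠ k → δ ≤ pd (a j) (a k)) ∧
      (⋃ k, Eball δ (a k)) = Bset n ∧
      ∀ x ∈ Bset n, ({k | x ∈ Eball δ (a k)}).Finite ∧
        ({k | x ∈ Eball δ (a k)}).ncard ≤ N := by
  have hn1 : 1 ≤ n := by omega
  obtain ⟨S, h0S, hmax⟩ := exists_maximal_sep (n := n) (δ := δ) hδ0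
  have hSB : S ⊆ Bset n := hmax.1.1
  have hSp : S.Pairwise fun a b => δ ≤ pd a b := hmax.1.2
  have hnorm : ∀ a ∈ S, ‖a‖ < 1 := fun a ha => (mem_Bset_iff a).mp (hSB ha)
  -- S is countable
  have hScount : S.Countable := by
    apply Set.PairwiseDisjoint.countable_of_isOpen
      (s := fun a : E n => Metric.ball a (δ/8 * (1 - ‖a‖^2)))
    · intro a ha b hb hab
      exact disj_balls hδ0 (hnorm a ha) (hnorm b hb) (hSp ha hb hab)
    · exact fun a _ => Metric.isOpen_ball
    · intro a ha
      refine ⟨a, Metric.mem_ball_self ?_⟩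
      have h1 := hnorm a ha
      have h2 : (0:ℝ) < 1 - ‖a‖^2 := by nlinarith [norm_nonneg a]
      positivity
  have hSinf : S.Infinite := maximal_infinite hn1 hδ0 hδ1 h0S hmax
  -- enumerate S
  haveI := hScount.to_subtype
  haveI := hSinf.to_subtype
  obtain ⟨dS⟩ := nonempty_denumerable ↥S
  set e : ↥S ≃ ℕ := Denumerable.eqv ↥S with he_def
  set a : ℕ → E n := fun k => (e.symm k : E n) with ha_def
  have haS : ∀ k, a k ∈ S := fun k => (e.symm k).2
  have hainj : Function.Injective a := fun j k h => by
    have : e.symm j = e.symm k := Subtype.coe_injective h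
    exact e.symm.injective this
  have hasurj : ∀ s ∈ S, ∃ k, a k = s := fun s hs => ⟨e ⟨s, hs⟩, by simp [ha_def]⟩
  -- separation
  have hsep : ∀ j k, j ≠ k → δ ≤ pd (a j) (a k) := by
    intro j k hjk
    exact hSp (haS j) (haS k) (fun h => hjk (hainj h))
  -- covering
  have hcov : (⋃ k, Eball δ (a k)) = Bset n := by
    apply Set.Subset.antisymm
    · exact Set.iUnion_subset fun k x hx => hx.1
    · intro x hx
      by_contra hxn
      rw [Set.mem_iUnion] at hxn
      push_neg at hxn
      have hfar : ∀ k, δ ≤ pd (a k) x := by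
        intro k
        by_contra h
        push_neg at h
        exact hxn k ⟨hx, h⟩
      have hxnotS : x ∉ S := by
        intro hxS
        obtain ⟨k, hk⟩ := hasurj x hxS
        have := hfar k
        rw [hk, pd_self] at this
        linarith
      have hT : insert x S ∈ {S : Set (E n) | S ⊆ Bset n ∧ S.Pairwise fun a b => δ ≤ pd a b} := by
        constructor
        · exact insert_subset hx hSB
        · haveI : Std.Symm (fun a b : E n => δ ≤ pd a b) := ⟨fun a b h => pd_symmetric h⟩
          rw [pairwise_insert_of_symm]
          refine ⟨hSp, fun b hb _ => ?_⟩
          obtain ⟨k, hk⟩ := hasurj b hb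
          rw [pd_comm, ← hk]
          exact hfar k
      exact hxnotS (hmax.2 hT (subset_insert x S) (mem_insert x S))
  -- multiplicity
  set M : ℝ := (96 / (δ * (1 - δ^2)^2)) ^ n with hM_def
  refine ⟨a, ⌈M⌉₊ + 1, Nat.succ_pos _, fun k => hSB (haS k), hsep, hcov, ?_⟩
  intro x hx
  have hxn : ‖x‖ < 1 := (mem_Bset_iff x).mp hx
  have hbound : ∀ F : Finset ℕ, ↑F ⊆ {k | x ∈ Eball δ (a k)} → F.card ≤ ⌈M⌉₊ + 1 := by
    intro F hF
    have h1 : (F.card : ℝ) ≤ M := by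
      apply count_bound hn1 hδ0 hδ1 hxn a F
      · intro k hk
        have := hF hk
        exact ⟨hnorm _ (haS k), this.2⟩
      · intro j hj k hk hjk
        exact hsep j k hjk
    have h2 : (F.card : ℝ) ≤ (⌈M⌉₊ : ℝ) := le_trans h1 (Nat.le_ceil M)
    have h3 : F.card ≤ ⌈M⌉₊ := Nat.cast_le.mp h2
    omega
  have hfin : ({k | x ∈ Eball δ (a k)}).Finite := by
    by_contra h
    have h' : ({k | x ∈ Eball δ (a k)}).Infinite := h
    obtain ⟨F, hFsub, hFcard⟩ := h'.exists_subset_card_eq (⌈M⌉₊ + 2)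
    have := hbound F hFsub
    omega
  refine ⟨hfin, ?_⟩
  rw [Set.ncard_eq_toFinset_card _ hfin]
  exact hbound hfin.toFinset (by rw [Set.Finite.coe_toFinset])
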